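/- Let γ̄ ≥ 0 and define the SM-NLMS update rule: w' = w + (μ̄/α) e x with μ̄ = 1 − γ̄/|e| if |e| > γ̄, and w' = w otherwise. If the coefficient deviation increases, i.e., ‖w_o − w'‖ > ‖w_o − w‖, then necessarily an update occurred and the noise dominated the noiseless error: |e| > γ̄ and ẽ² < n². -/

import Mathlib

open RealInnerProductSpace

/-- if the coefficient deviation increases after one step of the SM-NLMS
algorithm, then necessarily an update occurred and the noise dominated the noiseless
error. -/
theorem sm_nlms_deviation_increase_necessary (N : ℕ)
    (w_o w x : EuclideanSpace ℝ (Fin (N + 1)))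
    (n δ γ : ℝ) (hδ : 0 < δ) (hγ : 0 ≤ γ) :
    let d : ℝ := ⟪w_o, x⟫ + n
    let e : ℝ := d - ⟪w, x⟫
    let et : ℝ := ⟪w_o - w, x⟫
    let α : ℝ := ‖x‖ ^ 2 + δ
    let μb : ℝ := 1 - γ / |e|
    let w' : EuclideanSpace ℝ (Fin (N + 1)) :=
      if γ < |e| then w + ((μb / α) * e) • x else w
    ‖w_o - w‖ < ‖w_o - w'‖ → γ < |e| ∧ et ^ 2 < n ^ 2 := by
  intro d e et α μb w' hlt
  have hαpos : (0:ℝ) < α := by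
    have : (0:ℝ) ≤ ‖x‖ ^ 2 := by positivity
    simp only [α]; linarith
  by_cases hupd : γ < |e|
  · refine ⟨hupd, ?_⟩
    have heabs : 0 < |e| := lt_of_le_of_lt hγ hupd
    have he0 : e ≠ 0 := by simpa [abs_pos] using heabs
    have hμ1 : μb ≤ 1 := by
      have : 0 ≤ γ / |e| := div_nonneg hγ (abs_nonneg _)
      simp only [μb]; linarith
    have hμpos : 0 < μb := by
      have : γ / |e| < 1 := (div_lt_one heabs).mpr hupd
      simp only [μb]; linarith
    set c : ℝ := (μb / α) * e with hc
    have hw' : w' = w + c • x := if_pos hupd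
    have hee : e = et + n := by
      simp only [e, d, et, inner_sub_left]; ring
    have hexp : ‖w_o - w'‖ ^ 2 = ‖w_o - w‖ ^ 2 - 2 * c * et + c ^ 2 * ‖x‖ ^ 2 := by
      have : w_o - w' = (w_o - w) - c • x := by rw [hw']; abel
      rw [this, @norm_sub_sq_real, real_inner_smul_right, norm_smul]
      simp only [Real.norm_eq_abs, mul_pow, sq_abs, et]
      ring
    have hsq : ‖w_o - w‖ ^ 2 < ‖w_o - w'‖ ^ 2 :=
      pow_lt_pow_left₀ hlt (norm_nonneg _) two_ne_zero
    have h1 : 2 * c * et < c ^ 2 * ‖x‖ ^ 2 := by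
      rw [hexp] at hsq; linarith
    have hx2 : c ^ 2 * ‖x‖ ^ 2 ≤ c ^ 2 * α := by
      have : ‖x‖ ^ 2 ≤ α := by simp only [α]; linarith
      exact mul_le_mul_of_nonneg_left this (sq_nonneg c)
    have h2 : 2 * c * et < c ^ 2 * α := lt_of_lt_of_le h1 hx2
    have hc2 : c ^ 2 * α = μb ^ 2 * e ^ 2 / α := by
      rw [hc]; field_simp
    have h3 : 2 * μb * e * et < μb ^ 2 * e ^ 2 := by
      have h2' : 2 * ((μb / α) * e) * et * α < μb ^ 2 * e ^ 2 / α * α :=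
        mul_lt_mul_of_pos_right (hc2 ▸ h2) hαpos
      have hαne : α ≠ 0 := ne_of_gt hαpos
      field_simp at h2'
      nlinarith [h2']
    have hμe : μb * e ^ 2 ≤ 1 * e ^ 2 :=
      mul_le_mul_of_nonneg_right hμ1 (sq_nonneg e)
    have h3' : μb * (2 * e * et) < μb * e ^ 2 := by nlinarith [h3]
    have h4 : 2 * e * et < e ^ 2 :=
      lt_of_mul_lt_mul_left (lt_of_lt_of_le h3' (by linarith)) (le_of_lt hμpos)
    rw [hee] at h4
    nlinarith [h4]
  · exfalso
    have : w' = w := if_neg hupd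
    rw [this] at hlt
    exact lt_irrefl _ hlt
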